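/- Let (X,d) be a metric space, x₀ ∈ X, and let T, α, ε, K > 0 satisfy (2K+1)ε < 1/2. Let f : X × (0,T] → ℝ be a nonnegative function that is bounded on the set {x ∈ X : d(x₀,x) ≤ 1/2} × (0,T]. Suppose there exist x₁ ∈ X and t₁ ∈ (0,T] with d(x₀,x₁) ≤ ε and f(x₁,t₁)² ≥ α/t₁ + ε^{−2}. Then there exist x̄ ∈ X and t̄ ∈ (0,T] such that d(x₀,x̄) ≤ (2K+1)ε, f(x̄,t̄) ≥ ε^{−1}, f(x̄,t̄)² ≥ α/t̄, and f(x,t) ≤ 4 f(x̄,t̄) for every pair (x,t) ∈ X × (0,T] satisfying f(x,t)² ≥ α/t, t ≤ t̄, and d(x₀,x) ≤ d(x₀,x̄) + K / f(x̄,t̄). -/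
import Mathlib


/-- Point-picking claim inside Lemma 7.4 (Perelman-style point selection), phrased for
an arbitrary nonnegative function `f` on a metric space times a time interval `(0,T]`. -/
theorem point_picking_claim {X : Type*} [MetricSpace X] (x₀ : X)
    (T α ε K : ℝ) (hT : 0 < T) (hα : 0 < α) (hε : 0 < ε) (hK : 0 < K)
    (hKε : (2*K + 1) * ε < 1/2)
    (f : X → ℝ → ℝ)
    (hf_nonneg : ∀ x : X, ∀ t ∈ Set.Ioc (0:ℝ) T, 0 ≤ f x t)
    (hf_bdd : ∃ B : ℝ, ∀ x : X, ∀ t ∈ Set.Ioc (0:ℝ) T,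
      dist x₀ x ≤ 1/2 → f x t ≤ B)
    (x₁ : X) (t₁ : ℝ) (ht₁ : t₁ ∈ Set.Ioc (0:ℝ) T)
    (hd₁ : dist x₀ x₁ ≤ ε)
    (hf₁ : α / t₁ + ε⁻¹^2 ≤ (f x₁ t₁)^2) :
    ∃ xb : X, ∃ tb : ℝ, tb ∈ Set.Ioc (0:ℝ) T ∧
      dist x₀ xb ≤ (2*K + 1) * ε ∧
      ε⁻¹ ≤ f xb tb ∧
      α / tb ≤ (f xb tb)^2 ∧
      ∀ x : X, ∀ t ∈ Set.Ioc (0:ℝ) T,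
        α / t ≤ (f x t)^2 → t ≤ tb →
        dist x₀ x ≤ dist x₀ xb + K / f xb tb →
        f x t ≤ 4 * f xb tb := by
  classical
  obtain ⟨B, hB⟩ := hf_bdd
  by_contra hcon
  push_neg at hcon
  have hεinv : (0:ℝ) < ε⁻¹ := inv_pos.mpr hε
  -- the "good point" condition
  set Cond : X × ℝ → Prop := fun p => p.2 ∈ Set.Ioc (0:ℝ) T ∧
      dist x₀ p.1 ≤ (2*K + 1) * ε ∧ ε⁻¹ ≤ f p.1 p.2 ∧
      α / p.2 ≤ (f p.1 p.2)^2 with hCond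
  have key : ∀ p : X × ℝ, ∃ q : X × ℝ, Cond p →
      q.2 ∈ Set.Ioc (0:ℝ) T ∧ q.2 ≤ p.2 ∧
      dist x₀ q.1 ≤ dist x₀ p.1 + K / f p.1 p.2 ∧
      α / q.2 ≤ (f q.1 q.2)^2 ∧
      4 * f p.1 p.2 < f q.1 q.2 := by
    intro p
    by_cases hp : Cond p
    · obtain ⟨h1, h2, h3, h4⟩ := hp
      obtain ⟨x, t, ht, hαt, htle, hdist, hlt⟩ := hcon p.1 p.2 h1 h2 h3 h4
      exact ⟨(x, t), fun _ => ⟨ht, htle, hdist, hαt, hlt⟩⟩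
    · exact ⟨p, fun h => absurd h hp⟩
  choose step hstep using key
  set seq : ℕ → X × ℝ := fun n => step^[n] (x₁, t₁) with hseq
  have hf1 : ε⁻¹ ≤ f x₁ t₁ := by
    have h0 := hf_nonneg x₁ t₁ ht₁
    nlinarith [div_nonneg hα.le ht₁.1.le]
  have inv : ∀ n, Cond (seq n) ∧
      dist x₀ (seq n).1 ≤ ε + 2*K*ε*(1 - (4:ℝ)⁻¹^n) ∧
      (4:ℝ)^n * ε⁻¹ ≤ f (seq n).1 (seq n).2 := by
    intro n
    induction n with
    | zero =>
      have hseq0 : seq 0 = (x₁, t₁) := rfl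
      rw [hseq0]
      refine ⟨⟨ht₁, ?_, hf1, ?_⟩, ?_, ?_⟩
      · simp only
        nlinarith
      · simp only
        nlinarith [sq_nonneg ε⁻¹]
      · simp only
        norm_num
        linarith
      · simp only [pow_zero, one_mul]
        exact hf1
    | succ n ih =>
      obtain ⟨hc, hdistn, hfn⟩ := ih
      have hs := hstep (seq n) hc
      have hseqsucc : seq (n+1) = step (seq n) := Function.iterate_succ_apply' step n (x₁, t₁)
      rw [← hseqsucc] at hs
      obtain ⟨hIoc, htle, hdists, hαq, hflt⟩ := hs
      have h4n : (0:ℝ) < (4:ℝ)^n := by positivity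
      have hrn : (0:ℝ) < (4:ℝ)⁻¹^n := by positivity
      have hrn1 : (0:ℝ) < (4:ℝ)⁻¹^(n+1) := by positivity
      have hmul : (4:ℝ)⁻¹^n * (4:ℝ)^n = 1 := by
        rw [← mul_pow]; norm_num
      have hfnpos : 0 < f (seq n).1 (seq n).2 := lt_of_lt_of_le (by positivity) hfn
      have hKf : K / f (seq n).1 (seq n).2 ≤ K * ε * (4:ℝ)⁻¹^n := by
        rw [div_le_iff₀ hfnpos]
        have h2 := mul_le_mul_of_nonneg_left hfn (show (0:ℝ) ≤ K * ε * (4:ℝ)⁻¹^n by positivity)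
        have h3 : K * ε * (4:ℝ)⁻¹^n * ((4:ℝ)^n * ε⁻¹) = K * (ε * ε⁻¹) * ((4:ℝ)⁻¹^n * (4:ℝ)^n) := by
          ring
        rw [h3, mul_inv_cancel₀ hε.ne', hmul, mul_one, mul_one] at h2
        linarith
      have hpow4 : (4:ℝ)⁻¹^(n+1) = (4:ℝ)⁻¹^n * 4⁻¹ := pow_succ _ _
      have hp : (0:ℝ) ≤ K * ε * (4:ℝ)⁻¹^n := by positivity
      have hdist1 : dist x₀ (seq (n+1)).1 ≤ ε + 2*K*ε*(1 - (4:ℝ)⁻¹^(n+1)) := by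
        rw [hpow4]
        nlinarith [hp]
      have hfnew : (4:ℝ)^(n+1) * ε⁻¹ ≤ f (seq (n+1)).1 (seq (n+1)).2 := by
        rw [pow_succ]
        nlinarith
      have hfnew' : ε⁻¹ ≤ f (seq (n+1)).1 (seq (n+1)).2 := by
        have h1 : (1:ℝ) ≤ (4:ℝ)^(n+1) := one_le_pow₀ (by norm_num)
        have h2 := mul_le_mul_of_nonneg_right h1 hεinv.le
        rw [one_mul] at h2
        linarith
      refine ⟨⟨hIoc, ?_, hfnew', hαq⟩, hdist1, hfnew⟩
      have hp1 : (0:ℝ) ≤ K * ε * (4:ℝ)⁻¹^(n+1) := by positivity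
      nlinarith [hp1]
  obtain ⟨n, hn⟩ := pow_unbounded_of_one_lt (B * ε) (by norm_num : (1:ℝ) < 4)
  obtain ⟨hc, hd, hfb⟩ := inv n
  have hdist2 : dist x₀ (seq n).1 ≤ 1/2 := le_trans hc.2.1 hKε.le
  have hBn := hB (seq n).1 (seq n).2 hc.1 hdist2
  have hBlt : B < (4:ℝ)^n * ε⁻¹ := by
    have := mul_lt_mul_of_pos_right hn hεinv
    have hBe : B * ε * ε⁻¹ = B := by field_simp
    linarith [hBe ▸ this]
  linarith
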